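/- For every real r > 1 and δ ≥ 0, (1+r)^(r-1)·(1+(r-1)/(1+δ))^{-r} ≤ 1 implies (1+2r)^(r-1)·(1+2(r-1)/(1+δ))^{-r} ≤ 1; that is, S^{IP} ⊆ S^{IPH}. -/

import Mathlib

open Real

/-- Key inequality: `(1+2r)^(r-1) * (1+r) ≤ (2r)^r` for `r > 1`. -/
lemma key_ineq (r : ℝ) (hr : 1 < r) :
    (1 + 2 * r) ^ (r - 1) * (1 + r) ≤ (2 * r) ^ r := by
  have hr0 : (0:ℝ) < r := by linarith
  have h2r : (0:ℝ) < 2 * r := by linarith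
  have h2r1 : (0:ℝ) < 1 + 2 * r := by linarith
  have hsplit : (2 * r) ^ r = (2 * r) ^ (r - 1) * (2 * r) := by
    have hre : r = (r - 1) + 1 := by ring
    calc (2 * r) ^ r = (2 * r) ^ ((r - 1) + 1) := by rw [← hre]
      _ = (2 * r) ^ (r - 1) * (2 * r) ^ (1:ℝ) := Real.rpow_add h2r _ _
      _ = (2 * r) ^ (r - 1) * (2 * r) := by rw [Real.rpow_one]
  rcases le_or_gt r 2 with h2 | h2
  · -- 1 < r ≤ 2 : reversed Bernoulli with exponent r-1 ∈ [0,1]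
    have hb : (1 + 1 / (2 * r)) ^ (r - 1) ≤ 1 + (r - 1) * (1 / (2 * r)) :=
      rpow_one_add_le_one_add_mul_self
        (le_trans (by norm_num : (-1:ℝ) ≤ 0) (by positivity))
        (by linarith) (by linarith)
    have hfact : (1 + 2 * r : ℝ) = (2 * r) * (1 + 1 / (2 * r)) := by
      field_simp; ring
    have hmul : (1 + 2 * r) ^ (r - 1)
        = (2 * r) ^ (r - 1) * (1 + 1 / (2 * r)) ^ (r - 1) := by
      rw [hfact, Real.mul_rpow h2r.le (by positivity)]
    have halg : (1 + (r - 1) * (1 / (2 * r))) * (1 + r) ≤ 2 * r := by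
      have hrep : (1 + (r - 1) * (1 / (2 * r))) = (3 * r - 1) / (2 * r) := by
        field_simp; ring
      rw [hrep, div_mul_eq_mul_div, div_le_iff₀ h2r]
      nlinarith [sq_nonneg (r - 1)]
    calc (1 + 2 * r) ^ (r - 1) * (1 + r)
        = (2 * r) ^ (r - 1) * ((1 + 1 / (2 * r)) ^ (r - 1) * (1 + r)) := by
          rw [hmul]; ring
      _ ≤ (2 * r) ^ (r - 1) * ((1 + (r - 1) * (1 / (2 * r))) * (1 + r)) := by
          apply mul_le_mul_of_nonneg_left _ (by positivity)
          apply mul_le_mul_of_nonneg_right hb (by linarith)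
      _ ≤ (2 * r) ^ (r - 1) * (2 * r) := by
          apply mul_le_mul_of_nonneg_left halg (by positivity)
      _ = (2 * r) ^ r := hsplit.symm
  · -- r > 2 : Bernoulli with exponent r-1 ≥ 1
    have hs : (-1:ℝ) ≤ -(1 / (1 + 2 * r)) := by
      rw [neg_le_neg_iff]
      rw [div_le_one h2r1]; linarith
    have hb : 1 + (r - 1) * (-(1 / (1 + 2 * r)))
        ≤ (1 + -(1 / (1 + 2 * r))) ^ (r - 1) :=
      one_add_mul_self_le_rpow_one_add hs (by linarith)
    have hfact : (1 + -(1 / (1 + 2 * r)) : ℝ) = (2 * r) / (1 + 2 * r) := by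
      field_simp; ring
    have hlhs : 1 + (r - 1) * (-(1 / (1 + 2 * r))) = (r + 2) / (1 + 2 * r) := by
      field_simp; ring
    have hb' : (r + 2) / (1 + 2 * r) ≤ (2 * r) ^ (r - 1) / (1 + 2 * r) ^ (r - 1) := by
      rw [← Real.div_rpow h2r.le h2r1.le, ← hfact, ← hlhs]; exact hb
    have hcmp : (1 + r) / (2 * r) ≤ (r + 2) / (1 + 2 * r) := by
      rw [div_le_div_iff₀ h2r h2r1]; nlinarith
    have hchain : (1 + r) / (2 * r) ≤ (2 * r) ^ (r - 1) / (1 + 2 * r) ^ (r - 1) :=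
      hcmp.trans hb'
    have hp1 : (0:ℝ) < (1 + 2 * r) ^ (r - 1) := Real.rpow_pos_of_pos h2r1 _
    have hp2 : (0:ℝ) < (2 * r) ^ (r - 1) := Real.rpow_pos_of_pos h2r _
    rw [hsplit]
    rw [div_le_div_iff₀ h2r hp1] at hchain
    nlinarith [hchain]

theorem stmt_13 (r δ : ℝ) (hr : 1 < r) (hδ : 0 ≤ δ) :
    (1 + r) ^ (r - 1) * (1 + (r - 1) / (1 + δ)) ^ (-r) ≤ 1 →
      (1 + 2 * r) ^ (r - 1) * (1 + 2 * (r - 1) / (1 + δ)) ^ (-r) ≤ 1 := by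
  intro h
  set a : ℝ := (r - 1) / (1 + δ) with ha_def
  have hδ1 : (0:ℝ) < 1 + δ := by linarith
  have ha : 0 < a := div_pos (by linarith) hδ1
  have h1a : (0:ℝ) < 1 + a := by linarith
  have h12a : (0:ℝ) < 1 + 2 * a := by linarith
  have h1r : (0:ℝ) < 1 + r := by linarith
  have h2a : (1 + 2 * (r - 1) / (1 + δ) : ℝ) = 1 + 2 * a := by
    rw [ha_def]; ring
  -- turn hypothesis into `(1+r)^(r-1) ≤ (1+a)^r`
  have h1 : (1 + r) ^ (r - 1) ≤ (1 + a) ^ r := by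
    rw [Real.rpow_neg h1a.le, ← div_eq_mul_inv,
      div_le_one (Real.rpow_pos_of_pos h1a r)] at h
    exact h
  -- rewrite goal
  rw [h2a, Real.rpow_neg h12a.le, ← div_eq_mul_inv,
    div_le_one (Real.rpow_pos_of_pos h12a r)]
  -- Step 1 : a ≥ (r-1)/2
  have hbern : 1 + r ≤ (2:ℝ) ^ r := by
    have := one_add_mul_self_le_rpow_one_add (by norm_num : (-1:ℝ) ≤ 1)
      (le_of_lt hr) (s := 1) (p := r)
    norm_num at this
    linarith
  have hstep : ((1 + r) / 2) ^ r ≤ (1 + r) ^ (r - 1) := by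
    rw [Real.div_rpow h1r.le (by norm_num), Real.rpow_sub h1r, Real.rpow_one]
    apply div_le_div_of_nonneg_left (Real.rpow_pos_of_pos h1r r).le h1r hbern
  have h2 : (1 + r) / 2 ≤ 1 + a := by
    have := hstep.trans h1
    exact (Real.rpow_le_rpow_iff (by positivity) h1a.le (by linarith)).mp this
  -- Step 2 : ratio bound
  have hratio : 2 * r / (1 + r) ≤ (1 + 2 * a) / (1 + a) := by
    rw [div_le_div_iff₀ h1r h1a]; nlinarith
  -- Step 3 : combine
  have hkey := key_ineq r hr
  have hfinal : (2 * r / (1 + r)) ^ r * (1 + r) ^ (r - 1) ≤ (1 + 2 * a) ^ r := by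
    calc (2 * r / (1 + r)) ^ r * (1 + r) ^ (r - 1)
        ≤ ((1 + 2 * a) / (1 + a)) ^ r * (1 + a) ^ r := by
          apply mul_le_mul
          · exact Real.rpow_le_rpow (by positivity) hratio (by linarith)
          · exact h1
          · positivity
          · positivity
      _ = (1 + 2 * a) ^ r := by
          rw [← Real.mul_rpow (by positivity) h1a.le, div_mul_cancel₀]
          exact h1a.ne'
  refine le_trans ?_ hfinal
  -- (1+2r)^(r-1) ≤ (2r/(1+r))^r * (1+r)^(r-1) = (2r)^r/(1+r)
  have heq : (2 * r / (1 + r)) ^ r * (1 + r) ^ (r - 1) = (2 * r) ^ r / (1 + r) := by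
    rw [Real.div_rpow (by positivity) h1r.le, Real.rpow_sub h1r, Real.rpow_one]
    field_simp
  rw [heq, le_div_iff₀ h1r]
  exact hkey
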